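/- For each unit vector a ∈ R^3, the quantity α := (1/2)(1 - (1/4) Σ_{s_x,s_y,s_z = ±1} Θ(a · v_{s_x s_y s_z})) is nonnegative, where v_{s_x s_y s_z} = (s_x, s_y, s_z)^T and Θ(t) = max(t, 0). -/

import Mathlib

open RealInnerProductSpace

/-- The vertex `(s_x, s_y, s_z)` of the cube `[-1,1]^3`, signs encoded by booleans. -/
noncomputable def cubeVtx (s : Fin 3 → Bool) : EuclideanSpace ℝ (Fin 3) :=
  WithLp.toLp 2 (fun k => if s k then (1 : ℝ) else -1)

lemma max_quad_bound (x : ℝ) : max x 0 ≤ x / 2 + (1 + x ^ 2) / 4 := by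
  apply max_le <;> nlinarith [sq_nonneg (x - 1), sq_nonneg (x + 1)]

def boolTripleEquiv : (Bool × Bool × Bool) ≃ (Fin 3 → Bool) where
  toFun b := ![b.1, b.2.1, b.2.2]
  invFun s := (s 0, s 1, s 2)
  left_inv b := rfl
  right_inv s := by funext k; fin_cases k <;> rfl

lemma boolTripleEquiv_apply (b : Bool × Bool × Bool) :
    boolTripleEquiv b = ![b.1, b.2.1, b.2.2] := rfl

theorem alpha_nonneg (a : EuclideanSpace ℝ (Fin 3)) (ha : ‖a‖ = 1) :
    0 ≤ (1 / 2) * (1 - (1 / 4) * ∑ s : Fin 3 → Bool, max ⟪a, cubeVtx s⟫ 0) := by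
  have hnorm : a 0 ^ 2 + a 1 ^ 2 + a 2 ^ 2 = 1 := by
    have h := real_inner_self_eq_norm_sq a
    rw [ha] at h
    rw [PiLp.inner_apply] at h
    simpa [RCLike.inner_apply, Fin.sum_univ_three, sq] using h
  rw [← Fintype.sum_equiv boolTripleEquiv (fun b => max ⟪a, cubeVtx (boolTripleEquiv b)⟫ 0)
      (fun s => max ⟪a, cubeVtx s⟫ 0) (fun b => rfl)]
  simp only [Fintype.sum_prod_type, Fintype.sum_bool,     PiLp.inner_apply, RCLike.inner_apply, conj_trivial, Fin.sum_univ_three, cubeVtx, boolTripleEquiv_apply, Matrix.cons_val_zero, Matrix.cons_val_one, Matrix.head_cons, PiLp.toLp_apply, Equiv.coe_fn_mk, Matrix.cons_val_two, Matrix.tail_cons]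
  norm_num
  nlinarith [max_quad_bound (a 0 + a 1 + a 2), max_quad_bound (a 0 + a 1 + -a 2),
    max_quad_bound (a 0 + -a 1 + a 2), max_quad_bound (a 0 + -a 1 + -a 2),
    max_quad_bound (-a 0 + a 1 + a 2), max_quad_bound (-a 0 + a 1 + -a 2),
    max_quad_bound (-a 0 + -a 1 + a 2), max_quad_bound (-a 0 + -a 1 + -a 2)]
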